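/- Every separation-logic formula a in the fragment S₁ (generated by atoms, ∧, ∨, ∃x, separating conjunction ⋆, and magic wands of the form (x ↦ ⟨y₁,…,y_k⟩) ─⋆ (·)) is semantically equivalent to a formula of the form ∃x₁,…,xₙ: c for some n ∈ ℕ, where c belongs to S₁ and is quantifier-free, i.e., for all states (s,h): (s,h) ⊨ a iff (s,h) ⊨ ∃x₁,…,xₙ: c. -/

import Mathlib

namespace QSLPaper

open scoped Classical

noncomputable section

/-- Variables: a countably infinite set. -/
abbrev Var : Type := ℕ
/-- Values. -/
abbrev Val : Type := ℤ
/-- Locations: positive integers. -/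
abbrev Loc : Type := ℕ+
/-- Stacks. -/
abbrev Stack : Type := Var → Val
/-- Heaps: finite partial functions from locations to `k`-tuples of values. -/
abbrev Heap (k : ℕ) : Type := Finmap (fun _ : Loc => Fin k → Val)
/-- Program states: stack-heap pairs. -/
abbrev HState (k : ℕ) : Type := Stack × Heap k

/-- Syntax of separation logic `SL(𝔄)`; atoms are predicates, i.e. sets of states. -/
inductive SL (k : ℕ) : Type where
  | tt : SL k
  | atom (p : Set (HState k)) : SL k
  | not (φ : SL k) : SL k
  | and (φ ψ : SL k) : SL k
  | or (φ ψ : SL k) : SL k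
  | ex (x : Var) (φ : SL k) : SL k
  | all (x : Var) (φ : SL k) : SL k
  | sep (φ ψ : SL k) : SL k
  | wand (φ ψ : SL k) : SL k

/-- Standard separation-logic satisfaction relation `(s,h) ⊨ φ`. -/
def SL.sat {k : ℕ} : SL k → HState k → Prop
  | .tt, _ => True
  | .atom p, σ => σ ∈ p
  | .not φ, σ => ¬ φ.sat σ
  | .and φ ψ, σ => φ.sat σ ∧ ψ.sat σ
  | .or φ ψ, σ => φ.sat σ ∨ ψ.sat σ
  | .ex x φ, σ => ∃ v : Val, φ.sat (Function.update σ.1 x v, σ.2)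
  | .all x φ, σ => ∀ v : Val, φ.sat (Function.update σ.1 x v, σ.2)
  | .sep φ ψ, σ => ∃ h₁ h₂ : Heap k, h₁.Disjoint h₂ ∧ σ.2 = h₁ ∪ h₂ ∧
      φ.sat (σ.1, h₁) ∧ ψ.sat (σ.1, h₂)
  | .wand φ ψ, σ => ∀ h' : Heap k, σ.2.Disjoint h' → φ.sat (σ.1, h') →
      ψ.sat (σ.1, σ.2 ∪ h')

/-- A formula is pure if its satisfaction does not depend on the heap. -/
def SL.Pure {k : ℕ} (B : SL k) : Prop :=
  ∀ (s : Stack) (h h' : Heap k), B.sat (s, h) ↔ B.sat (s, h')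

/-- All atoms of the formula belong to the set `𝔄` of atomic predicates. -/
def SL.atomsIn {k : ℕ} (𝔄 : Set (Set (HState k))) : SL k → Prop
  | .tt => True
  | .atom p => p ∈ 𝔄
  | .not φ => φ.atomsIn 𝔄
  | .and φ ψ => φ.atomsIn 𝔄 ∧ ψ.atomsIn 𝔄
  | .or φ ψ => φ.atomsIn 𝔄 ∧ ψ.atomsIn 𝔄
  | .ex _ φ => φ.atomsIn 𝔄
  | .all _ φ => φ.atomsIn 𝔄
  | .sep φ ψ => φ.atomsIn 𝔄 ∧ ψ.atomsIn 𝔄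
  | .wand φ ψ => φ.atomsIn 𝔄 ∧ ψ.atomsIn 𝔄

/-- Syntax of quantitative separation logic `QSL(𝔄)`:
`f ::= [φ] | [B]·f + [¬B]·f | q·f + (1−q)·f | f·f | 1−f | max(f,f) | min(f,f) |
       Sup x: f | Inf x: f | f ⋆ f | [φ] ─⋆ f`. -/
inductive QSL (k : ℕ) : Type where
  | iver (φ : SL k) : QSL k
  | ite (B : SL k) (g u : QSL k) : QSL k
  | pch (q : ℚ) (g u : QSL k) : QSL k
  | mul (g u : QSL k) : QSL k
  | onem (g : QSL k) : QSL k
  | qmax (g u : QSL k) : QSL k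
  | qmin (g u : QSL k) : QSL k
  | sup (x : Var) (g : QSL k) : QSL k
  | inf (x : Var) (g : QSL k) : QSL k
  | sep (g u : QSL k) : QSL k
  | wand (φ : SL k) (g : QSL k) : QSL k

/-- Well-formedness: guards of conditionals are pure, and all probabilities
lie in `[0,1]`.  A term `f : QSL k` with `f.WF` (and atoms in `𝔄`)
is a `QSL(𝔄)` formula as generated by the grammar. -/
def QSL.WF {k : ℕ} : QSL k → Prop
  | .iver _ => True
  | .ite B g u => B.Pure ∧ g.WF ∧ u.WF
  | .pch q g u => 0 ≤ q ∧ q ≤ 1 ∧ g.WF ∧ u.WF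
  | .mul g u => g.WF ∧ u.WF
  | .onem g => g.WF
  | .qmax g u => g.WF ∧ u.WF
  | .qmin g u => g.WF ∧ u.WF
  | .sup _ g => g.WF
  | .inf _ g => g.WF
  | .sep g u => g.WF ∧ u.WF
  | .wand _ g => g.WF

/-- All atoms of a `QSL` formula belong to `𝔄`. -/
def QSL.atomsIn {k : ℕ} (𝔄 : Set (Set (HState k))) : QSL k → Prop
  | .iver φ => φ.atomsIn 𝔄
  | .ite B g u => B.atomsIn 𝔄 ∧ g.atomsIn 𝔄 ∧ u.atomsIn 𝔄
  | .pch _ g u => g.atomsIn 𝔄 ∧ u.atomsIn 𝔄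
  | .mul g u => g.atomsIn 𝔄 ∧ u.atomsIn 𝔄
  | .onem g => g.atomsIn 𝔄
  | .qmax g u => g.atomsIn 𝔄 ∧ u.atomsIn 𝔄
  | .qmin g u => g.atomsIn 𝔄 ∧ u.atomsIn 𝔄
  | .sup _ g => g.atomsIn 𝔄
  | .inf _ g => g.atomsIn 𝔄
  | .sep g u => g.atomsIn 𝔄 ∧ u.atomsIn 𝔄
  | .wand φ g => φ.atomsIn 𝔄 ∧ g.atomsIn 𝔄

/-- The semantics `⟦f⟧ : States → ℝ` of quantitative separation logic. -/
noncomputable def QSL.eval {k : ℕ} : QSL k → HState k → ℝ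
  | .iver φ, σ => if φ.sat σ then 1 else 0
  | .ite B g u, σ =>
      (if B.sat σ then (1 : ℝ) else 0) * g.eval σ +
      (if (SL.not B).sat σ then (1 : ℝ) else 0) * u.eval σ
  | .pch q g u, σ => (q : ℝ) * g.eval σ + (1 - (q : ℝ)) * u.eval σ
  | .mul g u, σ => g.eval σ * u.eval σ
  | .onem g, σ => 1 - g.eval σ
  | .qmax g u, σ => max (g.eval σ) (u.eval σ)
  | .qmin g u, σ => min (g.eval σ) (u.eval σ)
  | .sup x g, σ => sSup { r : ℝ | ∃ v : Val, r = g.eval (Function.update σ.1 x v, σ.2) }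
  | .inf x g, σ => sInf { r : ℝ | ∃ v : Val, r = g.eval (Function.update σ.1 x v, σ.2) }
  | .sep g u, σ => sSup { r : ℝ | ∃ h₁ h₂ : Heap k, h₁.Disjoint h₂ ∧ σ.2 = h₁ ∪ h₂ ∧
      r = g.eval (σ.1, h₁) * u.eval (σ.1, h₂) }
  | .wand φ g, σ =>
      if { r : ℝ | ∃ h' : Heap k, σ.2.Disjoint h' ∧ φ.sat (σ.1, h') ∧
            r = g.eval (σ.1, σ.2 ∪ h') } = (∅ : Set ℝ) then 1
      else sInf { r : ℝ | ∃ h' : Heap k, σ.2.Disjoint h' ∧ φ.sat (σ.1, h') ∧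
            r = g.eval (σ.1, σ.2 ∪ h') }

end

end QSLPaper

namespace QSLPaper

noncomputable section

/-- The points-to predicate `x ↦ ⟨y₁,…,y_k⟩`: the heap consists of exactly one
cell, at the location denoted by `x`, containing the values of `y₁,…,y_k`. -/
def pointsToVars {k : ℕ} (x : Var) (ys : Fin k → Var) : Set (HState k) :=
  { σ | ∃ l : Loc, ((l : ℕ) : ℤ) = σ.1 x ∧
      σ.2 = Finmap.singleton l (fun i => σ.1 (ys i)) }

/-- The pure equality predicate `x = y`. -/
def eqVar {k : ℕ} (x y : Var) : Set (HState k) := { σ | σ.1 x = σ.1 y }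

/-- The pure disequality predicate `x ≠ y`. -/
def neVar {k : ℕ} (x y : Var) : Set (HState k) := { σ | σ.1 x ≠ σ.1 y }

/-- The empty-heap predicate `emp`. -/
def empAtom {k : ℕ} : Set (HState k) := { σ | σ.2 = ∅ }

/-- Symbolic-heap atomic predicates: points-to predicates, pure equalities
and disequalities of variables, and `emp`. -/
def IsSHAtom {k : ℕ} (p : Set (HState k)) : Prop :=
  (∃ x ys, p = pointsToVars x ys) ∨ (∃ x y, p = eqVar x y) ∨
  (∃ x y, p = neVar x y) ∨ p = empAtom

/-- Pure guards: equalities and disequalities of variables. -/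
def IsPureGuard {k : ℕ} (p : Set (HState k)) : Prop :=
  (∃ x y, p = eqVar x y) ∨ (∃ x y, p = neVar x y)

end

end QSLPaper

namespace QSLPaper

/-- The fragment `S₁`: atoms, `∧`, `∨`, `∃`, `⋆`, and magic wands whose
antecedent is a points-to predicate. -/
inductive InS1 {k : ℕ} : SL k → Prop where
  | atom {p : Set (HState k)} : IsSHAtom p → InS1 (.atom p)
  | and {a b : SL k} : InS1 a → InS1 b → InS1 (.and a b)
  | or {a b : SL k} : InS1 a → InS1 b → InS1 (.or a b)
  | ex {x : Var} {a : SL k} : InS1 a → InS1 (.ex x a)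
  | sep {a b : SL k} : InS1 a → InS1 b → InS1 (.sep a b)
  | wand {x : Var} {ys : Fin k → Var} {a : SL k} :
      InS1 a → InS1 (.wand (.atom (pointsToVars x ys)) a)

/-- The fragment `S₂`: atoms, `∧`, `∨`, `∃` and `⋆`. -/
inductive InS2 {k : ℕ} : SL k → Prop where
  | atom {p : Set (HState k)} : IsSHAtom p → InS2 (.atom p)
  | and {a b : SL k} : InS2 a → InS2 b → InS2 (.and a b)
  | or {a b : SL k} : InS2 a → InS2 b → InS2 (.or a b)
  | ex {x : Var} {a : SL k} : InS2 a → InS2 (.ex x a)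
  | sep {a b : SL k} : InS2 a → InS2 b → InS2 (.sep a b)

/-- Quantifier-free formulae. -/
def SL.QFree {k : ℕ} : SL k → Prop
  | .tt => True
  | .atom _ => True
  | .not φ => φ.QFree
  | .and φ ψ => φ.QFree ∧ ψ.QFree
  | .or φ ψ => φ.QFree ∧ ψ.QFree
  | .ex _ _ => False
  | .all _ _ => False
  | .sep φ ψ => φ.QFree ∧ ψ.QFree
  | .wand φ ψ => φ.QFree ∧ ψ.QFree

/-- Existential prefix `∃x₁,…,xₙ: φ`. -/
def SL.exs {k : ℕ} : List Var → SL k → SL k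
  | [], φ => φ
  | x :: xs, φ => .ex x (SL.exs xs φ)

end QSLPaper
namespace QSLPaper

/-- `c`'s satisfaction depends only on stack values on `V`. -/
def Supp {k : ℕ} (c : SL k) (V : Finset Var) : Prop :=
  ∀ (s s' : Stack) (h : Heap k), (∀ v ∈ V, s v = s' v) → (c.sat (s, h) ↔ c.sat (s', h))

theorem Supp.mono {k : ℕ} {c : SL k} {V V' : Finset Var} (h : Supp c V) (hVV : V ⊆ V') :
    Supp c V' := fun s s' hh hag => h s s' hh fun v hv => hag v (hVV hv)

theorem Supp.and {k : ℕ} {c d : SL k} {V : Finset Var} (hc : Supp c V) (hd : Supp d V) :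
    Supp (SL.and c d) V := by
  intro s s' h hag
  exact and_congr (hc s s' h hag) (hd s s' h hag)

theorem Supp.or {k : ℕ} {c d : SL k} {V : Finset Var} (hc : Supp c V) (hd : Supp d V) :
    Supp (SL.or c d) V := by
  intro s s' h hag
  exact or_congr (hc s s' h hag) (hd s s' h hag)

theorem Supp.sep {k : ℕ} {c d : SL k} {V : Finset Var} (hc : Supp c V) (hd : Supp d V) :
    Supp (SL.sep c d) V := by
  intro s s' h hag
  constructor
  · rintro ⟨h₁, h₂, hdis, hsum, h1, h2⟩
    exact ⟨h₁, h₂, hdis, hsum, (hc s s' h₁ hag).mp h1, (hd s s' h₂ hag).mp h2⟩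
  · rintro ⟨h₁, h₂, hdis, hsum, h1, h2⟩
    exact ⟨h₁, h₂, hdis, hsum, (hc s s' h₁ hag).mpr h1, (hd s s' h₂ hag).mpr h2⟩

theorem Supp.ex {k : ℕ} {c : SL k} {x : Var} {V : Finset Var} (hc : Supp c V) :
    Supp (SL.ex x c) V := by
  intro s s' h hag
  refine exists_congr fun v => hc _ _ h fun y hy => ?_
  by_cases hyx : y = x
  · subst hyx; simp
  · simp [Function.update_of_ne hyx, hag y hy]

theorem exs_sat {k : ℕ} (xs : List Var) (c : SL k) (s : Stack) (h : Heap k) :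
    (SL.exs xs c).sat (s, h) ↔ ∃ s' : Stack, (∀ y, y ∉ xs → s' y = s y) ∧ c.sat (s', h) := by
  induction xs generalizing s with
  | nil =>
    constructor
    · intro hc; exact ⟨s, fun _ _ => rfl, hc⟩
    · rintro ⟨s', hs', hc⟩
      have : s' = s := funext fun y => hs' y List.not_mem_nil
      rwa [this] at hc
  | cons x xs ih =>
    constructor
    · rintro ⟨v, hv⟩
      obtain ⟨s', hs', hc⟩ := (ih (Function.update s x v)).mp hv
      refine ⟨s', fun y hy => ?_, hc⟩
      have hyx : y ≠ x := fun e => hy (e ▸ List.mem_cons_self (a := x) (l := xs))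
      have hyxs : y ∉ xs := fun e => hy (List.mem_cons_of_mem _ e)
      rw [hs' y hyxs, Function.update_of_ne hyx]
    · rintro ⟨s', hs', hc⟩
      refine ⟨s' x, (ih (Function.update s x (s' x))).mpr ⟨s', fun y hy => ?_, hc⟩⟩
      by_cases hyx : y = x
      · subst hyx; rw [Function.update_self]
      · rw [Function.update_of_ne hyx]
        exact hs' y (fun e => (List.mem_cons.1 e).elim hyx hy)

theorem ptTo_stack_congr {k : ℕ} {x : Var} {ys : Fin k → Var} {s s' : Stack} {h : Heap k}
    (hx : s x = s' x) (hys : ∀ i, s (ys i) = s' (ys i)) :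
    ((s, h) : HState k) ∈ pointsToVars x ys ↔ ((s', h) : HState k) ∈ pointsToVars x ys := by
  unfold pointsToVars
  simp only [Set.mem_setOf_eq]
  constructor <;> rintro ⟨l, h1, h2⟩
  · exact ⟨l, by rw [h1]; exact hx, by rw [h2]; congr 1; funext i; rw [hys i]⟩
  · exact ⟨l, by rw [h1]; exact hx.symm, by rw [h2]; congr 1; funext i; rw [hys i]⟩

theorem ptTo_unique {k : ℕ} {x : Var} {ys : Fin k → Var} {s : Stack} {h₁ h₂ : Heap k}
    (h1 : ((s, h₁) : HState k) ∈ pointsToVars x ys)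
    (h2 : ((s, h₂) : HState k) ∈ pointsToVars x ys) : h₁ = h₂ := by
  obtain ⟨l₁, e₁, r₁⟩ := h1
  obtain ⟨l₂, e₂, r₂⟩ := h2
  have hl : l₁ = l₂ := by
    have h := e₁.trans e₂.symm
    exact_mod_cast h
  subst hl; exact r₁.trans r₂.symm

theorem shrink {k : ℕ} {xs ex : List Var} {c : SL k} {Wc : Finset Var} (hc : Supp c Wc)
    (hex : ∀ y ∈ ex, y ∉ Wc) (s : Stack) (h : Heap k) :
    (∃ s' : Stack, (∀ y, y ∉ xs → y ∉ ex → s' y = s y) ∧ c.sat (s', h)) ↔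
      ∃ s₁ : Stack, (∀ y, y ∉ xs → s₁ y = s y) ∧ c.sat (s₁, h) := by
  constructor
  · rintro ⟨s', hs', hcs⟩
    refine ⟨fun y => if y ∈ ex then s y else s' y, fun y hy => ?_, ?_⟩
    · by_cases hye : y ∈ ex
      · simp [hye]
      · simp [hye, hs' y hy hye]
    · refine (hc _ s' h fun v hv => ?_).mpr hcs
      have hve : v ∉ ex := fun hv2 => hex v hv2 hv
      simp [hve]
  · rintro ⟨s₁, hs₁, hcs⟩
    exact ⟨s₁, fun y hy _ => hs₁ y hy, hcs⟩

theorem merge {k : ℕ} {xs ys : List Var} {c d : SL k} {Wc Wd : Finset Var}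
    (hc : Supp c Wc) (hd : Supp d Wd)
    (hWc : ∀ y ∈ ys, y ∉ Wc) (hWd : ∀ y ∈ xs, y ∉ Wd) {s : Stack} {h₁ h₂ : Heap k}
    {s₁ : Stack} (hs₁ : ∀ y, y ∉ xs → s₁ y = s y) (hc1 : c.sat (s₁, h₁))
    {s₂ : Stack} (hs₂ : ∀ y, y ∉ ys → s₂ y = s y) (hd2 : d.sat (s₂, h₂)) :
    ∃ s' : Stack, (∀ y, y ∉ xs → y ∉ ys → s' y = s y) ∧ c.sat (s', h₁) ∧ d.sat (s', h₂) := by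
  refine ⟨fun y => if y ∈ xs then s₁ y else s₂ y, fun y hyx hyy => ?_, ?_, ?_⟩
  · simp [hyx, hs₂ y hyy]
  · refine (hc _ s₁ h₁ fun v hv => ?_).mpr hc1
    by_cases hvx : v ∈ xs
    · simp [hvx]
    · have hvy : v ∉ ys := fun hv2 => hWc v hv2 hv
      simp [hvx, hs₂ v hvy, hs₁ v hvx]
  · refine (hd _ s₂ h₂ fun v hv => ?_).mpr hd2
    have hvx : v ∉ xs := fun hv2 => hWd v hv2 hv
    simp [hvx]

end QSLPaper
namespace QSLPaper

theorem key {k : ℕ} (a : SL k) (ha : InS1 a) :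
    ∃ V : Finset Var, Supp a V ∧ ∀ (ρ : Var → Var) (F : Finset Var),
      ∃ (xs : List Var) (c : SL k) (W : Finset Var),
        InS1 c ∧ c.QFree ∧ Supp c W ∧ (∀ y ∈ xs, y ∉ F) ∧
        (∀ w ∈ W, w ∈ Finset.image ρ V ∨ w ∈ xs) ∧
        ∀ (s : Stack) (h : Heap k), (SL.exs xs c).sat (s, h) ↔ a.sat (s ∘ ρ, h) := by
  induction ha with
  | @atom p hp =>
    rcases hp with ⟨x, ys, rfl⟩ | ⟨x, y, rfl⟩ | ⟨x, y, rfl⟩ | rfl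
    · -- points-to
      refine ⟨insert x (Finset.image ys Finset.univ), ?_, ?_⟩
      · intro s s' h hag
        exact ptTo_stack_congr (hag x (Finset.mem_insert_self _ _))
          (fun i => hag (ys i) (Finset.mem_insert_of_mem
            (Finset.mem_image_of_mem ys (Finset.mem_univ i))))
      · intro ρ F
        refine ⟨[], .atom (pointsToVars (ρ x) (ρ ∘ ys)),
          insert (ρ x) (Finset.image (ρ ∘ ys) Finset.univ),
          .atom (Or.inl ⟨_, _, rfl⟩), trivial, ?_, fun y hy => absurd hy List.not_mem_nil,
          ?_, fun s h => Iff.rfl⟩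
        · intro s s' h hag
          exact ptTo_stack_congr (hag (ρ x) (Finset.mem_insert_self _ _))
            (fun i => hag (ρ (ys i)) (Finset.mem_insert_of_mem
              (Finset.mem_image_of_mem (ρ ∘ ys) (Finset.mem_univ i))))
        · intro w hw
          left
          rcases Finset.mem_insert.1 hw with rfl | hw
          · exact Finset.mem_image_of_mem ρ (Finset.mem_insert_self _ _)
          · rcases Finset.mem_image.1 hw with ⟨i, _, rfl⟩
            exact Finset.mem_image_of_mem ρ (Finset.mem_insert_of_mem
              (Finset.mem_image_of_mem ys (Finset.mem_univ i)))
    · -- eq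
      refine ⟨{x, y}, ?_, ?_⟩
      · intro s s' h hag
        have h1 := hag x (by simp)
        have h2 := hag y (by simp)
        show s x = s y ↔ s' x = s' y
        rw [h1, h2]
      · intro ρ F
        refine ⟨[], .atom (eqVar (ρ x) (ρ y)), {ρ x, ρ y},
          .atom (Or.inr (Or.inl ⟨_, _, rfl⟩)), trivial, ?_,
          fun y hy => absurd hy List.not_mem_nil, ?_, fun s h => Iff.rfl⟩
        · intro s s' h hag
          have h1 := hag (ρ x) (by simp)
          have h2 := hag (ρ y) (by simp)
          show s (ρ x) = s (ρ y) ↔ s' (ρ x) = s' (ρ y)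
          rw [h1, h2]
        · intro w hw
          left
          rcases Finset.mem_insert.1 hw with rfl | hw
          · exact Finset.mem_image_of_mem ρ (by simp)
          · rcases Finset.mem_singleton.1 hw with rfl
            exact Finset.mem_image_of_mem ρ (by simp)
    · -- ne
      refine ⟨{x, y}, ?_, ?_⟩
      · intro s s' h hag
        have h1 := hag x (by simp)
        have h2 := hag y (by simp)
        show s x ≠ s y ↔ s' x ≠ s' y
        rw [h1, h2]
      · intro ρ F
        refine ⟨[], .atom (neVar (ρ x) (ρ y)), {ρ x, ρ y},
          .atom (Or.inr (Or.inr (Or.inl ⟨_, _, rfl⟩))), trivial, ?_,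
          fun y hy => absurd hy List.not_mem_nil, ?_, fun s h => Iff.rfl⟩
        · intro s s' h hag
          have h1 := hag (ρ x) (by simp)
          have h2 := hag (ρ y) (by simp)
          show s (ρ x) ≠ s (ρ y) ↔ s' (ρ x) ≠ s' (ρ y)
          rw [h1, h2]
        · intro w hw
          left
          rcases Finset.mem_insert.1 hw with rfl | hw
          · exact Finset.mem_image_of_mem ρ (by simp)
          · rcases Finset.mem_singleton.1 hw with rfl
            exact Finset.mem_image_of_mem ρ (by simp)
    · -- emp
      refine ⟨∅, fun s s' h hag => Iff.rfl, ?_⟩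
      intro ρ F
      exact ⟨[], .atom empAtom, ∅, .atom (Or.inr (Or.inr (Or.inr rfl))), trivial,
        fun s s' h hag => Iff.rfl, fun y hy => absurd hy List.not_mem_nil,
        fun w hw => absurd hw (Finset.notMem_empty w), fun s h => Iff.rfl⟩
  | @and a b ha hb iha ihb =>
    obtain ⟨V₁, hS1, H1⟩ := iha
    obtain ⟨V₂, hS2, H2⟩ := ihb
    refine ⟨V₁ ∪ V₂, Supp.and (hS1.mono Finset.subset_union_left)
      (hS2.mono Finset.subset_union_right), ?_⟩
    intro ρ F
    obtain ⟨xs, c, Wc, hc1, hc2, hc3, hc4, hc5, hc6⟩ :=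
      H1 ρ (F ∪ Finset.image ρ (V₁ ∪ V₂))
    obtain ⟨ys, d, Wd, hd1, hd2, hd3, hd4, hd5, hd6⟩ :=
      H2 ρ (F ∪ Finset.image ρ (V₁ ∪ V₂) ∪ xs.toFinset ∪ Wc)
    have hysWc : ∀ y ∈ ys, y ∉ Wc := fun y hy hw =>
      hd4 y hy (Finset.mem_union_right _ hw)
    have hysxs : ∀ y ∈ ys, y ∉ xs := fun y hy hx =>
      hd4 y hy (Finset.mem_union_left _ (Finset.mem_union_right _ (List.mem_toFinset.2 hx)))
    have hxsWd : ∀ y ∈ xs, y ∉ Wd := fun y hy hw =>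
      (hd5 y hw).elim
        (fun him => hc4 y hy (Finset.mem_union_right _
          (Finset.image_subset_image Finset.subset_union_right him)))
        (fun hys => hysxs y hys hy)
    refine ⟨xs ++ ys, .and c d, Wc ∪ Wd, .and hc1 hd1, ⟨hc2, hd2⟩,
      Supp.and (hc3.mono Finset.subset_union_left) (hd3.mono Finset.subset_union_right),
      ?_, ?_, ?_⟩
    · intro y hy
      rcases List.mem_append.1 hy with hy | hy
      · exact fun hf => hc4 y hy (Finset.mem_union_left _ hf)
      · exact fun hf => hd4 y hy
          (Finset.mem_union_left _ (Finset.mem_union_left _ (Finset.mem_union_left _ hf)))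
    · intro w hw
      rcases Finset.mem_union.1 hw with hw | hw
      · rcases hc5 w hw with him | hx
        · exact Or.inl (Finset.image_subset_image Finset.subset_union_left him)
        · exact Or.inr (List.mem_append_left _ hx)
      · rcases hd5 w hw with him | hx
        · exact Or.inl (Finset.image_subset_image Finset.subset_union_right him)
        · exact Or.inr (List.mem_append_right _ hx)
    · intro s h
      rw [exs_sat]
      constructor
      · rintro ⟨s', hs', hcs, hds⟩
        have hs'2 : ∀ y, y ∉ xs → y ∉ ys → s' y = s y := fun y h1 h2 =>
          hs' y (fun hm => (List.mem_append.1 hm).elim h1 h2)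
        constructor
        · obtain ⟨s₁, hs₁, hcs₁⟩ := (shrink hc3 hysWc s h).mp ⟨s', hs'2, hcs⟩
          exact (hc6 s h).mp ((exs_sat xs c s h).mpr ⟨s₁, hs₁, hcs₁⟩)
        · obtain ⟨s₂, hs₂, hds₂⟩ := (shrink hd3 hxsWd s h).mp
            ⟨s', fun y h1 h2 => hs'2 y h2 h1, hds⟩
          exact (hd6 s h).mp ((exs_sat ys d s h).mpr ⟨s₂, hs₂, hds₂⟩)
      · rintro ⟨has, hbs⟩
        obtain ⟨s₁, hs₁, hcs⟩ := (exs_sat xs c s h).mp ((hc6 s h).mpr has)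
        obtain ⟨s₂, hs₂, hds⟩ := (exs_sat ys d s h).mp ((hd6 s h).mpr hbs)
        obtain ⟨s', hs', hcs', hds'⟩ := merge hc3 hd3 hysWc hxsWd hs₁ hcs hs₂ hds
        exact ⟨s', fun y hy => hs' y (fun hx => hy (List.mem_append_left _ hx))
          (fun hx => hy (List.mem_append_right _ hx)), hcs', hds'⟩
  | @or a b ha hb iha ihb =>
    obtain ⟨V₁, hS1, H1⟩ := iha
    obtain ⟨V₂, hS2, H2⟩ := ihb
    refine ⟨V₁ ∪ V₂, Supp.or (hS1.mono Finset.subset_union_left)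
      (hS2.mono Finset.subset_union_right), ?_⟩
    intro ρ F
    obtain ⟨xs, c, Wc, hc1, hc2, hc3, hc4, hc5, hc6⟩ :=
      H1 ρ (F ∪ Finset.image ρ (V₁ ∪ V₂))
    obtain ⟨ys, d, Wd, hd1, hd2, hd3, hd4, hd5, hd6⟩ :=
      H2 ρ (F ∪ Finset.image ρ (V₁ ∪ V₂) ∪ xs.toFinset ∪ Wc)
    have hysWc : ∀ y ∈ ys, y ∉ Wc := fun y hy hw =>
      hd4 y hy (Finset.mem_union_right _ hw)
    have hysxs : ∀ y ∈ ys, y ∉ xs := fun y hy hx =>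
      hd4 y hy (Finset.mem_union_left _ (Finset.mem_union_right _ (List.mem_toFinset.2 hx)))
    have hxsWd : ∀ y ∈ xs, y ∉ Wd := fun y hy hw =>
      (hd5 y hw).elim
        (fun him => hc4 y hy (Finset.mem_union_right _
          (Finset.image_subset_image Finset.subset_union_right him)))
        (fun hys => hysxs y hys hy)
    refine ⟨xs ++ ys, .or c d, Wc ∪ Wd, .or hc1 hd1, ⟨hc2, hd2⟩,
      Supp.or (hc3.mono Finset.subset_union_left) (hd3.mono Finset.subset_union_right),
      ?_, ?_, ?_⟩
    · intro y hy
      rcases List.mem_append.1 hy with hy | hy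
      · exact fun hf => hc4 y hy (Finset.mem_union_left _ hf)
      · exact fun hf => hd4 y hy
          (Finset.mem_union_left _ (Finset.mem_union_left _ (Finset.mem_union_left _ hf)))
    · intro w hw
      rcases Finset.mem_union.1 hw with hw | hw
      · rcases hc5 w hw with him | hx
        · exact Or.inl (Finset.image_subset_image Finset.subset_union_left him)
        · exact Or.inr (List.mem_append_left _ hx)
      · rcases hd5 w hw with him | hx
        · exact Or.inl (Finset.image_subset_image Finset.subset_union_right him)
        · exact Or.inr (List.mem_append_right _ hx)
    · intro s h
      rw [exs_sat]
      constructor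
      · rintro ⟨s', hs', hcd⟩
        have hs'2 : ∀ y, y ∉ xs → y ∉ ys → s' y = s y := fun y h1 h2 =>
          hs' y (fun hm => (List.mem_append.1 hm).elim h1 h2)
        rcases hcd with hcs | hds
        · obtain ⟨s₁, hs₁, hcs₁⟩ := (shrink hc3 hysWc s h).mp ⟨s', hs'2, hcs⟩
          exact Or.inl ((hc6 s h).mp ((exs_sat xs c s h).mpr ⟨s₁, hs₁, hcs₁⟩))
        · obtain ⟨s₂, hs₂, hds₂⟩ := (shrink hd3 hxsWd s h).mp
            ⟨s', fun y h1 h2 => hs'2 y h2 h1, hds⟩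
          exact Or.inr ((hd6 s h).mp ((exs_sat ys d s h).mpr ⟨s₂, hs₂, hds₂⟩))
      · rintro (has | hbs)
        · obtain ⟨s₁, hs₁, hcs⟩ := (exs_sat xs c s h).mp ((hc6 s h).mpr has)
          exact ⟨s₁, fun y hy => hs₁ y (fun hx => hy (List.mem_append_left _ hx)),
            Or.inl hcs⟩
        · obtain ⟨s₂, hs₂, hds⟩ := (exs_sat ys d s h).mp ((hd6 s h).mpr hbs)
          exact ⟨s₂, fun y hy => hs₂ y (fun hx => hy (List.mem_append_right _ hx)),
            Or.inr hds⟩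
  | @sep a b ha hb iha ihb =>
    obtain ⟨V₁, hS1, H1⟩ := iha
    obtain ⟨V₂, hS2, H2⟩ := ihb
    refine ⟨V₁ ∪ V₂, Supp.sep (hS1.mono Finset.subset_union_left)
      (hS2.mono Finset.subset_union_right), ?_⟩
    intro ρ F
    obtain ⟨xs, c, Wc, hc1, hc2, hc3, hc4, hc5, hc6⟩ :=
      H1 ρ (F ∪ Finset.image ρ (V₁ ∪ V₂))
    obtain ⟨ys, d, Wd, hd1, hd2, hd3, hd4, hd5, hd6⟩ :=
      H2 ρ (F ∪ Finset.image ρ (V₁ ∪ V₂) ∪ xs.toFinset ∪ Wc)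
    have hysWc : ∀ y ∈ ys, y ∉ Wc := fun y hy hw =>
      hd4 y hy (Finset.mem_union_right _ hw)
    have hysxs : ∀ y ∈ ys, y ∉ xs := fun y hy hx =>
      hd4 y hy (Finset.mem_union_left _ (Finset.mem_union_right _ (List.mem_toFinset.2 hx)))
    have hxsWd : ∀ y ∈ xs, y ∉ Wd := fun y hy hw =>
      (hd5 y hw).elim
        (fun him => hc4 y hy (Finset.mem_union_right _
          (Finset.image_subset_image Finset.subset_union_right him)))
        (fun hys => hysxs y hys hy)
    refine ⟨xs ++ ys, .sep c d, Wc ∪ Wd, .sep hc1 hd1, ⟨hc2, hd2⟩,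
      Supp.sep (hc3.mono Finset.subset_union_left) (hd3.mono Finset.subset_union_right),
      ?_, ?_, ?_⟩
    · intro y hy
      rcases List.mem_append.1 hy with hy | hy
      · exact fun hf => hc4 y hy (Finset.mem_union_left _ hf)
      · exact fun hf => hd4 y hy
          (Finset.mem_union_left _ (Finset.mem_union_left _ (Finset.mem_union_left _ hf)))
    · intro w hw
      rcases Finset.mem_union.1 hw with hw | hw
      · rcases hc5 w hw with him | hx
        · exact Or.inl (Finset.image_subset_image Finset.subset_union_left him)
        · exact Or.inr (List.mem_append_left _ hx)
      · rcases hd5 w hw with him | hx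
        · exact Or.inl (Finset.image_subset_image Finset.subset_union_right him)
        · exact Or.inr (List.mem_append_right _ hx)
    · intro s h
      rw [exs_sat]
      constructor
      · rintro ⟨s', hs', h₁, h₂, hdis, hsum, hcs, hds⟩
        have hs'2 : ∀ y, y ∉ xs → y ∉ ys → s' y = s y := fun y h1 h2 =>
          hs' y (fun hm => (List.mem_append.1 hm).elim h1 h2)
        obtain ⟨s₁, hs₁, hcs₁⟩ := (shrink hc3 hysWc s h₁).mp ⟨s', hs'2, hcs⟩
        obtain ⟨s₂, hs₂, hds₂⟩ := (shrink hd3 hxsWd s h₂).mp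
          ⟨s', fun y ha hb => hs'2 y hb ha, hds⟩
        exact ⟨h₁, h₂, hdis, hsum,
          (hc6 s h₁).mp ((exs_sat xs c s h₁).mpr ⟨s₁, hs₁, hcs₁⟩),
          (hd6 s h₂).mp ((exs_sat ys d s h₂).mpr ⟨s₂, hs₂, hds₂⟩)⟩
      · rintro ⟨h₁, h₂, hdis, hsum, has, hbs⟩
        obtain ⟨s₁, hs₁, hcs⟩ := (exs_sat xs c s h₁).mp ((hc6 s h₁).mpr has)
        obtain ⟨s₂, hs₂, hds⟩ := (exs_sat ys d s h₂).mp ((hd6 s h₂).mpr hbs)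
        obtain ⟨s', hs', hcs', hds'⟩ := merge hc3 hd3 hysWc hxsWd hs₁ hcs hs₂ hds
        exact ⟨s', fun y hy => hs' y (fun hx => hy (List.mem_append_left _ hx))
          (fun hx => hy (List.mem_append_right _ hx)), h₁, h₂, hdis, hsum, hcs', hds'⟩
  | @ex x a ha iha =>
    obtain ⟨V, hS, H⟩ := iha
    refine ⟨V, Supp.ex hS, ?_⟩
    intro ρ F
    obtain ⟨z, hz⟩ := Infinite.exists_notMem_finset (F ∪ Finset.image ρ V)
    obtain ⟨xs, c, Wc, h1, h2, h3, h4, h5, h6⟩ := H (Function.update ρ x z) (insert z F)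
    refine ⟨z :: xs, c, Wc, h1, h2, h3, ?_, ?_, ?_⟩
    · intro y hy
      rcases List.mem_cons.1 hy with rfl | hy
      · exact fun hf => hz (Finset.mem_union_left _ hf)
      · exact fun hf => h4 y hy (Finset.mem_insert_of_mem hf)
    · intro w hw
      rcases h5 w hw with him | hxs
      · rcases Finset.mem_image.1 him with ⟨y, hyV, rfl⟩
        by_cases hyx : y = x
        · subst hyx
          rw [Function.update_self]
          exact Or.inr List.mem_cons_self
        · rw [Function.update_of_ne hyx]
          exact Or.inl (Finset.mem_image_of_mem ρ hyV)
      · exact Or.inr (List.mem_cons_of_mem _ hxs)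
    · intro s h
      show (∃ v, (SL.exs xs c).sat (Function.update s z v, h)) ↔
        ∃ v, a.sat (Function.update (s ∘ ρ) x v, h)
      refine exists_congr fun v => ?_
      rw [h6]
      refine hS _ _ h fun y hyV => ?_
      by_cases hyx : y = x
      · subst hyx
        show Function.update s z v (Function.update ρ y z y) = Function.update (s ∘ ρ) y v y
        rw [Function.update_self, Function.update_self, Function.update_self]
      · show Function.update s z v (Function.update ρ x z y) = Function.update (s ∘ ρ) x v y
        rw [Function.update_of_ne hyx, Function.update_of_ne hyx]
        have hρy : ρ y ≠ z := fun he =>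
          hz (Finset.mem_union_right _ (he ▸ Finset.mem_image_of_mem ρ hyV))
        rw [Function.update_of_ne hρy]
        rfl
  | @wand x ys0 a ha iha =>
    obtain ⟨V, hS, H⟩ := iha
    refine ⟨insert x (Finset.image ys0 Finset.univ) ∪ V, ?_, ?_⟩
    · -- Supp
      intro s s' h hag
      have hagx : s x = s' x :=
        hag x (Finset.mem_union_left _ (Finset.mem_insert_self _ _))
      have hagy : ∀ i, s (ys0 i) = s' (ys0 i) := fun i =>
        hag (ys0 i) (Finset.mem_union_left _ (Finset.mem_insert_of_mem
          (Finset.mem_image_of_mem ys0 (Finset.mem_univ i))))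
      have hagV : ∀ v ∈ V, s v = s' v := fun v hv => hag v (Finset.mem_union_right _ hv)
      constructor
      · intro hw h' hd hp
        exact (hS s s' (h ∪ h') hagV).mp
          (hw h' hd ((ptTo_stack_congr hagx hagy).mpr hp))
      · intro hw h' hd hp
        exact (hS s s' (h ∪ h') hagV).mpr
          (hw h' hd ((ptTo_stack_congr hagx hagy).mp hp))
    · intro ρ F
      obtain ⟨xs, c, Wc, h1, h2, h3, h4, h5, h6⟩ :=
        H ρ (F ∪ insert (ρ x) (Finset.image (ρ ∘ ys0) Finset.univ))
      have hxsP : ∀ y ∈ xs, y ∉ insert (ρ x) (Finset.image (ρ ∘ ys0) Finset.univ) :=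
        fun y hy hp => h4 y hy (Finset.mem_union_right _ hp)
      have hP1 : ρ x ∉ xs := fun hx => hxsP _ hx (Finset.mem_insert_self _ _)
      have hP2 : ∀ i, ρ (ys0 i) ∉ xs := fun i hx =>
        hxsP _ hx (Finset.mem_insert_of_mem
          (Finset.mem_image_of_mem (ρ ∘ ys0) (Finset.mem_univ i)))
      refine ⟨xs, .wand (.atom (pointsToVars (ρ x) (ρ ∘ ys0))) c,
        Wc ∪ insert (ρ x) (Finset.image (ρ ∘ ys0) Finset.univ),
        .wand h1, ⟨trivial, h2⟩, ?_, fun y hy hf => h4 y hy (Finset.mem_union_left _ hf),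
        ?_, ?_⟩
      · -- Supp of wand
        intro s s' h hag
        have hagx : s (ρ x) = s' (ρ x) :=
          hag (ρ x) (Finset.mem_union_right _ (Finset.mem_insert_self _ _))
        have hagy : ∀ i, s (ρ (ys0 i)) = s' (ρ (ys0 i)) := fun i =>
          hag (ρ (ys0 i)) (Finset.mem_union_right _ (Finset.mem_insert_of_mem
            (Finset.mem_image_of_mem (ρ ∘ ys0) (Finset.mem_univ i))))
        have hagW : ∀ v ∈ Wc, s v = s' v := fun v hv => hag v (Finset.mem_union_left _ hv)
        constructor
        · intro hw h' hd hp
          exact (h3 s s' (h ∪ h') hagW).mp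
            (hw h' hd ((ptTo_stack_congr hagx hagy).mpr hp))
        · intro hw h' hd hp
          exact (h3 s s' (h ∪ h') hagW).mpr
            (hw h' hd ((ptTo_stack_congr hagx hagy).mp hp))
      · intro w hw
        rcases Finset.mem_union.1 hw with hw | hw
        · rcases h5 w hw with him | hx
          · exact Or.inl (Finset.image_subset_image Finset.subset_union_right him)
          · exact Or.inr hx
        · left
          rcases Finset.mem_insert.1 hw with rfl | hw
          · exact Finset.mem_image_of_mem ρ
              (Finset.mem_union_left _ (Finset.mem_insert_self _ _))
          · rcases Finset.mem_image.1 hw with ⟨i, _, rfl⟩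
            exact Finset.mem_image_of_mem ρ (Finset.mem_union_left _
              (Finset.mem_insert_of_mem (Finset.mem_image_of_mem ys0 (Finset.mem_univ i))))
      · intro s h
        rw [exs_sat]
        constructor
        · rintro ⟨s', hs', hw⟩ h' hd hp
          have hps : ((s, h') : HState k) ∈ pointsToVars (ρ x) (ρ ∘ ys0) := hp
          have hp' : ((s', h') : HState k) ∈ pointsToVars (ρ x) (ρ ∘ ys0) :=
            (ptTo_stack_congr (hs' _ hP1).symm (fun i => (hs' _ (hP2 i)).symm)).mp hps
          have hc := hw h' hd hp'
          exact (h6 s (h ∪ h')).mp ((exs_sat xs c s (h ∪ h')).mpr ⟨s', hs', hc⟩)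
        · intro hw
          by_cases hex : ∃ h' : Heap k, h.Disjoint h' ∧
              ((s, h') : HState k) ∈ pointsToVars (ρ x) (ρ ∘ ys0)
          · obtain ⟨h₀, hd0, hp0⟩ := hex
            have ha0 : a.sat (s ∘ ρ, h ∪ h₀) := hw h₀ hd0 hp0
            obtain ⟨s'', hs'', hc⟩ :=
              (exs_sat xs c s (h ∪ h₀)).mp ((h6 s (h ∪ h₀)).mpr ha0)
            refine ⟨s'', hs'', fun h' hd hp => ?_⟩
            have hp' : ((s, h') : HState k) ∈ pointsToVars (ρ x) (ρ ∘ ys0) :=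
              (ptTo_stack_congr (hs'' _ hP1) (fun i => hs'' _ (hP2 i))).mp hp
            have hh : h' = h₀ := ptTo_unique hp' hp0
            subst hh
            exact hc
          · exact ⟨s, fun y _ => rfl, fun h' hd hp => absurd ⟨h', hd, hp⟩ hex⟩

end QSLPaper

namespace QSLPaper

/-- Every separation-logic formula `a` in the fragment `S₁`
(atoms, `∧`, `∨`, `∃x`, `⋆`, and magic wands `(x ↦ ⟨y₁,…,y_k⟩) ─⋆ (·)`) is
semantically equivalent to a formula `∃x₁,…,xₙ: c` for some `n ∈ ℕ`, where `c`
belongs to `S₁` and is quantifier-free. -/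
theorem s1_prenex {k : ℕ} (hk : 1 ≤ k) (a : SL k) (ha : InS1 a) :
    ∃ (xs : List Var) (c : SL k), InS1 c ∧ c.QFree ∧
      ∀ σ : HState k, a.sat σ ↔ (SL.exs xs c).sat σ := by
  obtain ⟨V, -, H⟩ := key a ha
  obtain ⟨xs, c, W, h1, h2, -, -, -, h6⟩ := H id ∅
  exact ⟨xs, c, h1, h2, fun σ => (h6 σ.1 σ.2).symm⟩

end QSLPaper
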